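/- Let H be a real Hilbert space, ℓ : H → ℝ a linear map, s ∈ H, n ≥ 1 an integer, λ > 0, and M a collection of finite-dimensional subspaces of H that is totally ordered by inclusion (nested models). Suppose m₀ ∈ M minimizes ‖P_m s − s‖² + λ D_m/(4n) over m ∈ M, and m̂ ∈ M minimizes −‖ŝ_m‖² + λ D_m/n over m ∈ M. Then ‖P_{m₀} s − s‖ ≤ ‖ŝ_{m̂} − s‖. -/

import Mathlib

open scoped RealInnerProductSpace

private lemma pyth {H : Type*} [NormedAddCommGroup H] [InnerProductSpace ℝ H]
    {V : Submodule ℝ H} {a b : H} (ha : a ∈ V) (hb : b ∈ Vᗮ) :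
    ‖a + b‖ ^ 2 = ‖a‖ ^ 2 + ‖b‖ ^ 2 := by
  have h : ⟪a, b⟫ = 0 := (Submodule.mem_orthogonal V b).1 hb a ha
  rw [norm_add_sq_real, h]; ring

private lemma key_ineq {A B : ℝ} (hA : 0 ≤ A) (hB : 0 ≤ B)
    (h : 4 * A ^ 2 ≤ (A + B) ^ 2) : A ^ 2 ≤ B ^ 2 := by
  nlinarith [sq_nonneg (A - B)]

private lemma le_of_sq {a b : ℝ} (hb : 0 ≤ b) (h : a ^ 2 ≤ b ^ 2) : a ≤ b := by
  nlinarith [sq_nonneg (a - b), sq_nonneg (a + b)]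

set_option maxHeartbeats 1000000 in
/-- the nested-models lemma: pathwise, the bias of the deterministic
minimizer is dominated by the error of the penalized least-squares estimator. -/
theorem stmt_3 {H : Type*} [NormedAddCommGroup H] [InnerProductSpace ℝ H]
    (ℓ : H →ₗ[ℝ] ℝ) (s : H) (n : ℕ) (hn : 1 ≤ n) (lam : ℝ) (hlam : 0 < lam)
    (M : Set (Submodule ℝ H)) (hfin : ∀ m ∈ M, FiniteDimensional ℝ m)
    -- the collection is totally ordered by inclusion (nested models)
    (hnested : ∀ m ∈ M, ∀ m' ∈ M, m ≤ m' ∨ m' ≤ m)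
    -- `proj V` is the orthogonal projection of `s` onto `V`
    (proj : Submodule ℝ H → H)
    (hproj : ∀ V : Submodule ℝ H, FiniteDimensional ℝ V →
      proj V ∈ V ∧ s - proj V ∈ Vᗮ)
    -- `w V` is the unique vector of `V` representing `ℓ` on `V`
    (w : Submodule ℝ H → H)
    (hw : ∀ V : Submodule ℝ H, FiniteDimensional ℝ V →
      w V ∈ V ∧ ∀ x ∈ V, ⟪w V, x⟫ = ℓ x)
    -- the least-squares estimators
    (shat : Submodule ℝ H → H)
    (hshat : ∀ m : Submodule ℝ H, shat m = proj m + ((n : ℝ) ^ (-(1 / 2 : ℝ))) • w m)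
    -- `m₀` minimizes the deterministic criterion with penalty `λ D_m/(4n)`
    (m₀ : Submodule ℝ H) (hm₀ : m₀ ∈ M)
    (hminm₀ : ∀ m ∈ M,
      ‖proj m₀ - s‖ ^ 2 + lam * (Module.finrank ℝ m₀ : ℝ) / (4 * n) ≤
        ‖proj m - s‖ ^ 2 + lam * (Module.finrank ℝ m : ℝ) / (4 * n))
    -- `mhat` minimizes the penalized empirical criterion
    (mhat : Submodule ℝ H) (hmhat : mhat ∈ M)
    (hminhat : ∀ m ∈ M,
      -‖shat mhat‖ ^ 2 + lam * (Module.finrank ℝ mhat : ℝ) / n ≤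
        -‖shat m‖ ^ 2 + lam * (Module.finrank ℝ m : ℝ) / n) :
    ‖proj m₀ - s‖ ≤ ‖shat mhat - s‖ := by
  have hn0 : (0:ℝ) < (n:ℝ) := by exact_mod_cast Nat.lt_of_lt_of_le Nat.zero_lt_one hn
  have hnne : (n:ℝ) ≠ 0 := ne_of_gt hn0
  set c : ℝ := (n : ℝ) ^ (-(1 / 2 : ℝ)) with hcdef
  have hc0 : 0 ≤ c := Real.rpow_nonneg (le_of_lt hn0) _
  have hf0 := hfin m₀ hm₀
  have hfh := hfin mhat hmhat
  obtain ⟨hp0mem, hp0orth⟩ := hproj m₀ hf0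
  obtain ⟨hphmem, hphorth⟩ := hproj mhat hfh
  obtain ⟨hw0mem, hw0rep⟩ := hw m₀ hf0
  obtain ⟨hwhmem, hwhrep⟩ := hw mhat hfh
  have hnormc : ‖c • w mhat‖ = c * ‖w mhat‖ := by
    rw [norm_smul, Real.norm_eq_abs, abs_of_nonneg hc0]
  -- decomposition of the error of shat mhat
  have hkey : ‖shat mhat - s‖ ^ 2 = ‖c • w mhat‖ ^ 2 + ‖proj mhat - s‖ ^ 2 := by
    have horth : proj mhat - s ∈ mhatᗮ := by
      simpa [neg_sub] using Submodule.neg_mem mhatᗮ hphorth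
    have h := pyth (Submodule.smul_mem mhat c hwhmem) horth
    have heq : c • w mhat + (proj mhat - s) = shat mhat - s := by
      rw [hshat mhat]; abel
    rw [heq] at h
    exact h
  rcases hnested m₀ hm₀ mhat hmhat with hle | hle
  · -- m₀ ≤ mhat
    set u : H := proj mhat - proj m₀ with hu
    set v : H := w mhat - w m₀ with hv
    have humem : u ∈ mhat := Submodule.sub_mem _ hphmem (hle hp0mem)
    have huorth : u ∈ m₀ᗮ := by
      have h2 : s - proj mhat ∈ m₀ᗮ := Submodule.orthogonal_le hle hphorth
      have h3 := Submodule.sub_mem _ hp0orth h2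
      have heq : (s - proj m₀) - (s - proj mhat) = u := by rw [hu]; abel
      rwa [heq] at h3
    have hvorth : v ∈ m₀ᗮ := by
      rw [Submodule.mem_orthogonal']
      intro x hx
      rw [hv, inner_sub_left, hwhrep x (hle hx), hw0rep x hx, sub_self]
    -- Pythagoras identities
    have e1 : ‖proj m₀ - s‖ ^ 2 = ‖proj mhat - s‖ ^ 2 + ‖u‖ ^ 2 := by
      have h := pyth humem hphorth
      have heq : u + (s - proj mhat) = s - proj m₀ := by rw [hu]; abel
      rw [heq] at h
      rw [norm_sub_rev (proj m₀) s, norm_sub_rev (proj mhat) s]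
      linarith
    have e2 : ‖w mhat‖ ^ 2 = ‖w m₀‖ ^ 2 + ‖v‖ ^ 2 := by
      have h := pyth hw0mem hvorth
      have heq : w m₀ + v = w mhat := by rw [hv]; abel
      rw [heq] at h
      exact h
    have e3 : ‖shat mhat‖ ^ 2 = ‖shat m₀‖ ^ 2 + ‖u + c • v‖ ^ 2 := by
      have hmem : shat m₀ ∈ m₀ := by
        rw [hshat m₀]
        exact Submodule.add_mem _ hp0mem (Submodule.smul_mem _ _ hw0mem)
      have horth : u + c • v ∈ m₀ᗮ :=
        Submodule.add_mem _ huorth (Submodule.smul_mem _ _ hvorth)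
      have h := pyth hmem horth
      have heq : shat m₀ + (u + c • v) = shat mhat := by
        rw [hshat m₀, hshat mhat, hu, hv, smul_sub]; abel
      rw [heq] at h
      exact h
    -- the two minimality inequalities
    have i1 := hminm₀ mhat hmhat
    have i2 := hminhat m₀ hm₀
    have hv_le : ‖v‖ ≤ ‖w mhat‖ :=
      le_of_sq (norm_nonneg _) (by nlinarith [sq_nonneg ‖w m₀‖])
    have h3 : ‖u + c • v‖ ≤ ‖u‖ + c * ‖w mhat‖ := by
      calc ‖u + c • v‖ ≤ ‖u‖ + ‖c • v‖ := norm_add_le _ _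
        _ ≤ ‖u‖ + c * ‖w mhat‖ := by
            rw [norm_smul, Real.norm_eq_abs, abs_of_nonneg hc0]
            exact add_le_add le_rfl (mul_le_mul_of_nonneg_left hv_le hc0)
    have h3' : ‖u + c • v‖ ^ 2 ≤ (‖u‖ + c * ‖w mhat‖) ^ 2 :=
      pow_le_pow_left₀ (norm_nonneg _) h3 2
    -- translate the penalty differences
    have eden : lam * (Module.finrank ℝ mhat : ℝ) / n - lam * (Module.finrank ℝ m₀ : ℝ) / n
        = 4 * (lam * (Module.finrank ℝ mhat : ℝ) / (4 * n)
            - lam * (Module.finrank ℝ m₀ : ℝ) / (4 * n)) := by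
      field_simp
    have hA : 4 * ‖u‖ ^ 2 ≤ lam * (Module.finrank ℝ mhat : ℝ) / n
        - lam * (Module.finrank ℝ m₀ : ℝ) / n := by
      rw [eden]; linarith
    have hB : lam * (Module.finrank ℝ mhat : ℝ) / n
        - lam * (Module.finrank ℝ m₀ : ℝ) / n ≤ ‖u + c • v‖ ^ 2 := by linarith
    have hfinal : ‖u‖ ^ 2 ≤ (c * ‖w mhat‖) ^ 2 :=
      key_ineq (norm_nonneg u) (mul_nonneg hc0 (norm_nonneg (w mhat)))
        (by linarith)
    apply le_of_sq (norm_nonneg _)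
    rw [hkey, hnormc]
    linarith
  · -- mhat ≤ m₀
    have e0 : ‖proj m₀ - s‖ ^ 2 ≤ ‖proj mhat - s‖ ^ 2 := by
      have hmem : proj m₀ - proj mhat ∈ m₀ := Submodule.sub_mem _ hp0mem (hle hphmem)
      have h := pyth hmem hp0orth
      have heq : (proj m₀ - proj mhat) + (s - proj m₀) = s - proj mhat := by abel
      rw [heq] at h
      rw [norm_sub_rev (proj m₀) s, norm_sub_rev (proj mhat) s]
      nlinarith [sq_nonneg ‖proj m₀ - proj mhat‖]
    apply le_of_sq (norm_nonneg _)
    rw [hkey]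
    have := sq_nonneg ‖c • w mhat‖
    linarith
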